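/- Given a g1-regular (K1,F1,Z1,S1) base PDA with parameter λ and positive integers m, t with t ≤ m, each column of the array P_{m,t} defined by the union-of-Cartesian-products construction contains exactly λ^t·(F1/λ)^m·(1 − ((F1−Z1)/F1)^t) stars: a column indexed by (T, b) with T = {δ1 < … < δt} ⊆ [1:m] and b ∈ [1:K1]^t has a non-star entry at row (f, ε) ∈ [1:F1/λ]^m × [1:λ]^t if and only if P(f_{δh}, b_h) ≠ * for all h ∈ [1:t]. -/

import Mathlib

open Finset

/-- A (K,F,Z,S) placement delivery array: an F×K array over {*} ∪ [1:S],
    with `none` playing the role of `*`. Columns are indexed by `κ`. -/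
def IsPDA {F S : ℕ} {κ : Type} [Fintype κ]
    (Z : ℕ) (P : Fin F → κ → Option (Fin S)) : Prop :=
  -- C1: each column contains exactly Z stars
  (∀ k : κ, (Finset.univ.filter (fun j : Fin F => P j k = none)).card = Z) ∧
  -- C2: every integer occurs at least once
  (∀ s : Fin S, ∃ j k, P j k = some s) ∧
  -- C3: the 2×2 star-crossing condition
  (∀ j₁ j₂ : Fin F, ∀ k₁ k₂ : κ, ∀ s : Fin S,
    (j₁, k₁) ≠ (j₂, k₂) → P j₁ k₁ = some s → P j₂ k₂ = some s →
    P j₁ k₂ = none ∧ P j₂ k₁ = none)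

/-- `P` is `g`-regular: every integer appears exactly `g` times. -/
def PDARegular {F S : ℕ} {κ : Type} [Fintype κ]
    (g : ℕ) (P : Fin F → κ → Option (Fin S)) : Prop :=
  ∀ s : Fin S, (Finset.univ.filter
    (fun jk : Fin F × κ => P jk.1 jk.2 = some s)).card = g

/-- A base PDA with parameter `lam`: a PDA with `lam ∣ F`, `lam ∣ Z`,
    star pattern row-periodic with period `F/lam` (C4), and a star-row
    assignment `φ` into the first `F/lam` rows with all fibers of size
    `lam*S/F` (C5, stated multiplicatively: `card * F = lam * S`). -/
def IsBasePDA {F S : ℕ} {κ : Type} [Fintype κ]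
    (Z lam : ℕ) (P : Fin F → κ → Option (Fin S)) : Prop :=
  IsPDA Z P ∧ 0 < lam ∧ lam ∣ F ∧ lam ∣ Z ∧
  (∀ j₁ j₂ : Fin F, ∀ k : κ, j₁.val % (F / lam) = j₂.val % (F / lam) →
    (P j₁ k = none ↔ P j₂ k = none)) ∧
  (∃ φ : Fin S → Fin F, (∀ s, (φ s).val < F / lam) ∧
    (∀ s : Fin S, ∀ j : Fin F, ∀ k : κ, P j k = some s → P (φ s) k = none) ∧
    (∀ r : Fin F, r.val < F / lam →
      (Finset.univ.filter (fun s : Fin S => φ s = r)).card * F = lam * S))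

lemma residue_class_card (F q lam : ℕ) (hq : 0 < q) (hF : F = lam * q)
    (r : ℕ) (hr : r < q) :
    (Finset.univ.filter (fun j : Fin F => j.val % q = r)).card = lam := by
  rw [← Fintype.card_fin lam, ← Finset.card_univ]
  refine Finset.card_bij' (fun j _ => (⟨j.val / q, ?_⟩ : Fin lam))
    (fun i _ => (⟨i.val * q + r, ?_⟩ : Fin F)) ?_ ?_ ?_ ?_
  · rw [Nat.div_lt_iff_lt_mul hq, ← hF]; exact j.isLt
  · calc i.val * q + r < i.val * q + q := by omega
      _ = (i.val + 1) * q := by ring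
      _ ≤ lam * q := Nat.mul_le_mul_right q i.isLt
      _ = F := hF.symm
  · intro j hj; exact Finset.mem_univ _
  · intro i _
    simp only [Finset.mem_filter, Finset.mem_univ, true_and]
    rw [Nat.add_comm, Nat.add_mul_mod_self_right, Nat.mod_eq_of_lt hr]
  · intro j hj
    simp only [Finset.mem_filter, Finset.mem_univ, true_and] at hj
    apply Fin.ext
    simp only
    rw [← hj, Nat.div_add_mod']
  · intro i _
    apply Fin.ext
    simp only
    rw [Nat.add_comm, Nat.add_mul_div_right _ _ hq, Nat.div_eq_of_lt hr, Nat.zero_add]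

section Main

variable {K₁ F₁ Z₁ S₁ lam : ℕ} (P : Fin F₁ → Fin K₁ → Option (Fin S₁))

/-- In each column, the number of star rows among the first F₁/lam rows is Z₁/lam. -/
lemma period_star_card (hZ : ∀ k, (Finset.univ.filter (fun j : Fin F₁ => P j k = none)).card = Z₁)
    (hper : ∀ j₁ j₂ : Fin F₁, ∀ k, j₁.val % (F₁ / lam) = j₂.val % (F₁ / lam) →
      (P j₁ k = none ↔ P j₂ k = none))
    (hlam : 0 < lam) (hdvd : lam ∣ F₁) (hF : 0 < F₁) (k : Fin K₁) :
    (Finset.univ.filter (fun v : Fin (F₁ / lam) =>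
      P (Fin.castLE (Nat.div_le_self F₁ lam) v) k = none)).card = Z₁ / lam := by
  set q := F₁ / lam with hqdef
  have hFeq : F₁ = lam * q := (Nat.mul_div_cancel' hdvd).symm
  have hq : 0 < q := Nat.pos_of_ne_zero (fun h => by rw [h, Nat.mul_zero] at hFeq; omega)
  have key : Z₁ = (Finset.univ.filter (fun v : Fin q =>
      P (Fin.castLE (Nat.div_le_self F₁ lam) v) k = none)).card * lam := by
    rw [← hZ k]
    have hmap : ∀ j ∈ (Finset.univ.filter (fun j : Fin F₁ => P j k = none)),
        (⟨j.val % q, Nat.mod_lt _ hq⟩ : Fin q) ∈ (Finset.univ.filter (fun v : Fin q =>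
          P (Fin.castLE (Nat.div_le_self F₁ lam) v) k = none)) := by
      intro j hj
      simp only [Finset.mem_filter, Finset.mem_univ, true_and] at hj ⊢
      exact (hper j (Fin.castLE (Nat.div_le_self F₁ lam) ⟨j.val % q, Nat.mod_lt _ hq⟩) k
        (by simp only [Fin.coe_castLE]; exact (Nat.mod_mod_of_dvd _ dvd_rfl).symm)).mp hj
    rw [Finset.card_eq_sum_card_fiberwise hmap]
    have hfib : ∀ r ∈ (Finset.univ.filter (fun v : Fin q =>
        P (Fin.castLE (Nat.div_le_self F₁ lam) v) k = none)),
        ((Finset.univ.filter (fun j : Fin F₁ => P j k = none)).filter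
          (fun j => (⟨j.val % q, Nat.mod_lt _ hq⟩ : Fin q) = r)).card = lam := by
      intro r hr
      simp only [Finset.mem_filter, Finset.mem_univ, true_and] at hr
      have heq : (Finset.univ.filter (fun j : Fin F₁ => P j k = none)).filter
          (fun j => (⟨j.val % q, Nat.mod_lt _ hq⟩ : Fin q) = r)
          = Finset.univ.filter (fun j : Fin F₁ => j.val % q = r.val) := by
        ext j
        simp only [Finset.mem_filter, Finset.mem_univ, true_and]
        constructor
        · rintro ⟨_, h2⟩; rw [← h2]
        · intro h
          refine ⟨?_, Fin.ext h⟩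
          refine (hper (Fin.castLE (Nat.div_le_self F₁ lam) r) j k ?_).mp hr
          simp only [Fin.coe_castLE]
          rw [Nat.mod_eq_of_lt r.isLt]
          exact h.symm
      rw [heq, residue_class_card F₁ q lam hq hFeq r.val r.isLt]
    rw [Finset.sum_congr rfl hfib, Finset.sum_const, smul_eq_mul, Nat.mul_comm]
  rw [key, Nat.mul_div_cancel _ hlam]


lemma good_count (hZ : ∀ k, (Finset.univ.filter (fun j : Fin F₁ => P j k = none)).card = Z₁)
    (hper : ∀ j₁ j₂ : Fin F₁, ∀ k, j₁.val % (F₁ / lam) = j₂.val % (F₁ / lam) →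
      (P j₁ k = none ↔ P j₂ k = none))
    (hlam : 0 < lam) (hdvd : lam ∣ F₁) (hF : 0 < F₁) (k : Fin K₁) :
    (Finset.univ.filter (fun v : Fin (F₁ / lam) =>
      P (Fin.castLE (Nat.div_le_self F₁ lam) v) k ≠ none)).card = F₁ / lam - Z₁ / lam := by
  have h1 := period_star_card P hZ hper hlam hdvd hF k
  rw [Finset.filter_not, Finset.card_sdiff_of_subset (Finset.filter_subset _ _), h1,
    Finset.card_univ, Fintype.card_fin]

end Main


/-- in the union-of-Cartesian-products construction from a base
    PDA P, a column indexed by (T, b), T = {δ₁<…<δ_t} ⊆ [1:m], b ∈ [1:K₁]^t,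
    has a non-star entry at row (f,ε) iff P(f_{δ_h}, b_h) ≠ * for all h; thus
    the number of stars in the column (rows (f,ε) where some P(f_{δ_h},b_h)=*)
    equals λ^t(F₁/λ)^m(1 − ((F₁−Z₁)/F₁)^t). -/
theorem column_star_count (K₁ F₁ Z₁ S₁ g₁ lam : ℕ)
    (P : Fin F₁ → Fin K₁ → Option (Fin S₁))
    (hbase : IsBasePDA Z₁ lam P) (hreg : PDARegular g₁ P) (hF : 0 < F₁)
    (m t : ℕ) (ht : 0 < t) (htm : t ≤ m)
    (T : Finset (Fin m)) (hT : T.card = t) (b : Fin t → Fin K₁) :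
    (((Finset.univ.filter
        (fun fe : (Fin m → Fin (F₁ / lam)) × (Fin t → Fin lam) =>
          ¬ ∀ h : Fin t,
            P (Fin.castLE (Nat.div_le_self F₁ lam)
                (fe.1 ((T.orderIsoOfFin hT h : {x // x ∈ T}) : Fin m)))
              (b h) ≠ none)).card : ℚ))
      = (lam ^ t * (F₁ / lam) ^ m : ℕ) *
          (1 - (((F₁ : ℚ) - (Z₁ : ℚ)) / (F₁ : ℚ)) ^ t) := by
  obtain ⟨⟨hZ, -, -⟩, hlam, hdvdF, hdvdZ, hper, -⟩ := hbase
  have hFeq : F₁ = lam * (F₁ / lam) := (Nat.mul_div_cancel' hdvdF).symm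
  have hZeq : Z₁ = lam * (Z₁ / lam) := (Nat.mul_div_cancel' hdvdZ).symm
  have hq : 0 < F₁ / lam :=
    Nat.pos_of_ne_zero (fun h => by rw [h, Nat.mul_zero] at hFeq; omega)
  have hZF : Z₁ ≤ F₁ := by
    rw [← hZ (b ⟨0, ht⟩)]
    exact le_trans (Finset.card_filter_le _ _) (by simp)
  have hzq : Z₁ / lam ≤ F₁ / lam := Nat.div_le_div_right hZF
  -- the injection δ
  set δ : Fin t → Fin m :=
    fun h => ((T.orderIsoOfFin hT h : {x // x ∈ T}) : Fin m) with hδ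
  -- good values in each column
  set G : Fin K₁ → Finset (Fin (F₁ / lam)) := fun k =>
    Finset.univ.filter (fun v => P (Fin.castLE (Nat.div_le_self F₁ lam) v) k ≠ none) with hGdef
  have hG : ∀ k, (G k).card = F₁ / lam - Z₁ / lam :=
    fun k => good_count P hZ hper hlam hdvdF hF k
  -- per-coordinate constraint sets
  set s : Fin m → Finset (Fin (F₁ / lam)) := fun i =>
    if hi : i ∈ T then G (b ((T.orderIsoOfFin hT).symm ⟨i, hi⟩)) else Finset.univ with hs
  have hcond : ∀ f : Fin m → Fin (F₁ / lam),
      (∀ h : Fin t, P (Fin.castLE (Nat.div_le_self F₁ lam) (f (δ h))) (b h) ≠ none)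
        ↔ ∀ i, f i ∈ s i := by
    intro f
    constructor
    · intro hf i
      by_cases hi : i ∈ T
      · rw [hs]
        simp only [dif_pos hi]
        have key : δ ((T.orderIsoOfFin hT).symm ⟨i, hi⟩) = i := by
          rw [hδ]
          simp only [OrderIso.apply_symm_apply]
        have := hf ((T.orderIsoOfFin hT).symm ⟨i, hi⟩)
        rw [key] at this
        simpa [hGdef] using this
      · rw [hs]; simp [dif_neg hi]
    · intro hf h
      have hi : δ h ∈ T := (T.orderIsoOfFin hT h).2
      have := hf (δ h)
      rw [hs] at this
      simp only [dif_pos hi] at this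
      have hsymm : (T.orderIsoOfFin hT).symm ⟨δ h, hi⟩ = h := by
        have : (⟨δ h, hi⟩ : {x // x ∈ T}) = T.orderIsoOfFin hT h := Subtype.ext rfl
        rw [this, OrderIso.symm_apply_apply]
      rw [hsymm] at this
      simpa [hGdef] using this
  -- the good set as a pi-set times a full cube
  have hpi : (Finset.univ.filter
      (fun f : Fin m → Fin (F₁ / lam) =>
        ∀ h : Fin t, P (Fin.castLE (Nat.div_le_self F₁ lam) (f (δ h))) (b h) ≠ none))
      = Fintype.piFinset s := by
    ext f
    simp only [Finset.mem_filter, Finset.mem_univ, true_and, Fintype.mem_piFinset]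
    exact hcond f
  have hscard : ∀ i, (s i).card = if i ∈ T then F₁ / lam - Z₁ / lam else F₁ / lam := by
    intro i
    by_cases hi : i ∈ T
    · rw [hs]; simp only [dif_pos hi, if_pos hi]; exact hG _
    · rw [hs]; simp [dif_neg hi, if_neg hi]
  have hprod : ∏ i, (s i).card = (F₁ / lam - Z₁ / lam) ^ t * (F₁ / lam) ^ (m - t) := by
    rw [Finset.prod_congr rfl (fun i _ => hscard i),
      ← Finset.prod_filter_mul_prod_filter_not Finset.univ (· ∈ T)]
    have e1 : Finset.univ.filter (· ∈ T) = T := by ext i; simp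
    have e2 : Finset.univ.filter (fun i => ¬ i ∈ T) = Tᶜ := by ext i; simp
    rw [e1, e2, Finset.prod_congr rfl (fun i hi => if_pos hi),
      Finset.prod_congr rfl (fun i hi => if_neg (Finset.mem_compl.mp hi)),
      Finset.prod_const, Finset.prod_const, hT, Finset.card_compl, hT,
      Fintype.card_fin]
  -- split the product filter
  have hCprod : (Finset.univ.filter
      (fun fe : (Fin m → Fin (F₁ / lam)) × (Fin t → Fin lam) =>
        ∀ h : Fin t,
          P (Fin.castLE (Nat.div_le_self F₁ lam) (fe.1 (δ h))) (b h) ≠ none))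
      = (Finset.univ.filter
          (fun f : Fin m → Fin (F₁ / lam) =>
            ∀ h : Fin t, P (Fin.castLE (Nat.div_le_self F₁ lam) (f (δ h))) (b h) ≠ none))
        ×ˢ (Finset.univ : Finset (Fin t → Fin lam)) := by
    ext fe
    simp [Finset.mem_product]
  have hA : (Finset.univ.filter
      (fun fe : (Fin m → Fin (F₁ / lam)) × (Fin t → Fin lam) =>
        ∀ h : Fin t,
          P (Fin.castLE (Nat.div_le_self F₁ lam) (fe.1 (δ h))) (b h) ≠ none)).card
      = (F₁ / lam - Z₁ / lam) ^ t * (F₁ / lam) ^ (m - t) * lam ^ t := by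
    rw [hCprod, Finset.card_product, hpi, Fintype.card_piFinset, hprod,
      Finset.card_univ]
    simp [Fintype.card_fun]
  have htot : (Finset.univ : Finset ((Fin m → Fin (F₁ / lam)) × (Fin t → Fin lam))).card
      = (F₁ / lam) ^ m * lam ^ t := by
    simp [Fintype.card_fun]
  -- the star count
  have hmain : (Finset.univ.filter
      (fun fe : (Fin m → Fin (F₁ / lam)) × (Fin t → Fin lam) =>
        ¬ ∀ h : Fin t,
          P (Fin.castLE (Nat.div_le_self F₁ lam) (fe.1 (δ h))) (b h) ≠ none)).card
      = (F₁ / lam) ^ m * lam ^ t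
        - (F₁ / lam - Z₁ / lam) ^ t * (F₁ / lam) ^ (m - t) * lam ^ t := by
    rw [Finset.filter_not, Finset.card_sdiff_of_subset (Finset.filter_subset _ _), hA, htot]
  have hAle : (F₁ / lam - Z₁ / lam) ^ t * (F₁ / lam) ^ (m - t) * lam ^ t
      ≤ (F₁ / lam) ^ m * lam ^ t := by
    rw [← hA, ← htot]
    exact Finset.card_filter_le _ _
  rw [hmain]
  -- rational arithmetic
  push_cast [hzq, hAle]
  have hqQ : ((F₁ / lam : ℕ) : ℚ) ≠ 0 := by positivity
  have hlamQ : ((lam : ℕ) : ℚ) ≠ 0 := by positivity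
  have hFQ : (F₁ : ℚ) = (lam : ℚ) * ((F₁ / lam : ℕ) : ℚ) := by
    exact_mod_cast hFeq
  have hZQ : (Z₁ : ℚ) = (lam : ℚ) * ((Z₁ / lam : ℕ) : ℚ) := by
    exact_mod_cast hZeq
  rw [hFQ, hZQ]
  have hqm : ((F₁ / lam : ℕ) : ℚ) ^ m
      = ((F₁ / lam : ℕ) : ℚ) ^ (m - t) * ((F₁ / lam : ℕ) : ℚ) ^ t := by
    rw [← pow_add]; congr 1; omega
  rw [hqm]
  field_simp
  rw [mul_sub, mul_one, div_pow, mul_div_assoc', mul_div_cancel_left₀ _ (pow_ne_zero t hqQ)]
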